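/- Let N = 2^t with t ≥ 1 and let 0 ≤ θ < 2π. Let v_k = exp(i(θ + 2πk/N)) for k = 0,…,N−1 and let V_N = [v_k^l]_{k,l=0}^{N−1}. Then V_N = P_N^T · diag(V_{N/2}, V_{N/2}) · diag(I_{N/2}, Ḋ_{N/2}) · [[I_{N/2}, I_{N/2}],[I_{N/2}, −I_{N/2}]] · diag(I_{N/2}, c·I_{N/2}), where V_{N/2} = [v_{2k}^l]_{k,l=0}^{N/2−1} is the (N/2)×(N/2) Vandermonde matrix on the even nodes, Ḋ_{N/2} = diag(exp(2πil/N))_{l=0}^{N/2−1}, c = exp(iθN/2), I_{N/2} is the (N/2)×(N/2) identity matrix, and P_N is the even–odd permutation matrix. -/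

import Mathlib

open Matrix Complex

/-- The even–odd permutation matrix `P_N` of size `N = m + m`:
`(P x)_k = x_{2k}` for `0 ≤ k < m` and `(P x)_{m+k} = x_{2k+1}` for `0 ≤ k < m`. -/
noncomputable def evenOddPerm (m : ℕ) : Matrix (Fin (m + m)) (Fin (m + m)) ℂ :=
  Matrix.of fun i j =>
    if (j : ℕ) = (if (i : ℕ) < m then 2 * (i : ℕ) else 2 * ((i : ℕ) - m) + 1) then 1 else 0

lemma evenOddPerm_transpose_mul (m : ℕ)
    (M : Matrix (Fin (m+m)) (Fin (m+m)) ℂ) (k l : Fin (m+m)) :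
    ((evenOddPerm m)ᵀ * M) k l =
      M ⟨if (k:ℕ) % 2 = 0 then (k:ℕ)/2 else m + (k:ℕ)/2,
        by have := k.isLt; split_ifs <;> omega⟩ l := by
  rw [Matrix.mul_apply]
  rw [Finset.sum_eq_single (⟨if (k:ℕ) % 2 = 0 then (k:ℕ)/2 else m + (k:ℕ)/2,
    by have := k.isLt; split_ifs <;> omega⟩ : Fin (m+m))]
  · simp only [evenOddPerm, Matrix.transpose_apply, Matrix.of_apply]
    rw [if_pos, one_mul]
    have := k.isLt
    split_ifs <;> omega
  · intro j _ hne
    simp only [evenOddPerm, Matrix.transpose_apply, Matrix.of_apply]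
    rw [if_neg, zero_mul]
    intro h
    apply hne
    apply Fin.ext
    have := k.isLt; have := j.isLt
    simp only
    split_ifs at h ⊢ <;> omega
  · simp

lemma finSumFinEquiv_symm_eq (m : ℕ) (i : Fin (m+m)) :
    finSumFinEquiv.symm i =
      if h : (i:ℕ) < m then Sum.inl ⟨i, h⟩
      else Sum.inr ⟨(i:ℕ)-m, by have := i.isLt; omega⟩ := by
  by_cases h : (i:ℕ) < m
  · rw [dif_pos h]
    exact (congrArg finSumFinEquiv.symm
      (Fin.ext rfl : i = Fin.castAdd m (⟨i, h⟩ : Fin m))).trans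
      (finSumFinEquiv_symm_apply_castAdd _)
  · rw [dif_neg h]
    exact (congrArg finSumFinEquiv.symm
      (Fin.ext (show (i:ℕ) = m + ((i:ℕ)-m) by have := i.isLt; omega) :
        i = Fin.natAdd m (⟨(i:ℕ)-m, by have := i.isLt; omega⟩ : Fin m))).trans
      (finSumFinEquiv_symm_apply_natAdd _)

set_option maxHeartbeats 1000000 in
/-- Theorem 1 (radix-2 factorization of the Vandermonde matrix on equally spaced
counterclockwise nodes on the unit circle), with `N = 2 ^ t = m + m`. -/
theorem vandermonde_radix2_factorization_ccw
    (t : ℕ) (ht : 1 ≤ t) (m : ℕ) (hm : m = 2 ^ (t - 1))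
    (θ : ℝ) (hθ0 : 0 ≤ θ) (hθ1 : θ < 2 * Real.pi)
    (v : ℕ → ℂ)
    (hv : ∀ k : ℕ, v k =
      Complex.exp (Complex.I * ((θ : ℂ) + 2 * (Real.pi : ℂ) * (k : ℂ) / ((m : ℂ) + (m : ℂ))))) :
    (Matrix.of fun k l : Fin (m + m) => v (k : ℕ) ^ (l : ℕ)) =
      (evenOddPerm m)ᵀ *
      (Matrix.reindex finSumFinEquiv finSumFinEquiv
        (Matrix.fromBlocks
          (Matrix.of fun k l : Fin m => v (2 * (k : ℕ)) ^ (l : ℕ)) 0 0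
          (Matrix.of fun k l : Fin m => v (2 * (k : ℕ)) ^ (l : ℕ)))) *
      (Matrix.reindex finSumFinEquiv finSumFinEquiv
        (Matrix.fromBlocks (1 : Matrix (Fin m) (Fin m) ℂ) 0 0
          (Matrix.diagonal fun l : Fin m =>
            Complex.exp (2 * (Real.pi : ℂ) * Complex.I * ((l : ℕ) : ℂ) / ((m : ℂ) + (m : ℂ)))))) *
      (Matrix.reindex finSumFinEquiv finSumFinEquiv
        (Matrix.fromBlocks (1 : Matrix (Fin m) (Fin m) ℂ) 1 1 (-1))) *
      (Matrix.reindex finSumFinEquiv finSumFinEquiv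
        (Matrix.fromBlocks (1 : Matrix (Fin m) (Fin m) ℂ) 0 0
          (Complex.exp (Complex.I * (θ : ℂ) * (m : ℂ)) • (1 : Matrix (Fin m) (Fin m) ℂ)))) := by
  have hm1 : 1 ≤ m := by subst hm; exact Nat.one_le_two_pow
  have hmne : ((m:ℂ) + (m:ℂ)) ≠ 0 := by
    have h0 : (m:ℂ) ≠ 0 := Nat.cast_ne_zero.mpr (by omega)
    intro h
    apply h0
    linear_combination h / 2
  set ω : ℂ := Complex.exp (2 * (Real.pi:ℂ) * Complex.I / ((m:ℂ)+(m:ℂ))) with hω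
  set u : ℂ := Complex.exp (Complex.I * (θ:ℂ)) with hu
  have hv' : ∀ k : ℕ, v k = u * ω ^ k := by
    intro k
    rw [hv, hu, hω, ← Complex.exp_nat_mul, ← Complex.exp_add]
    congr 1
    field_simp
  have hvpow : ∀ K L : ℕ, v K ^ L = u ^ L * ω ^ (K * L) := by
    intro K L
    rw [hv', mul_pow, ← pow_mul]
  have hωm : ω ^ m = -1 := by
    rw [hω, ← Complex.exp_nat_mul,
      show (m:ℂ) * (2*(Real.pi:ℂ)*Complex.I/((m:ℂ)+(m:ℂ))) = (Real.pi:ℂ)*Complex.I by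
        have h0 : (m:ℂ) ≠ 0 := Nat.cast_ne_zero.mpr (by omega)
        field_simp; ring]
    exact Complex.exp_pi_mul_I
  have hωmm : ω ^ (m + m) = 1 := by rw [pow_add, hωm]; ring
  have hper : ∀ a b : ℕ, ω ^ (a*(m+m) + b) = ω ^ b := by
    intro a b
    rw [pow_add, pow_mul', hωmm, one_pow, one_mul]
  have hc : Complex.exp (Complex.I * (θ:ℂ) * (m:ℂ)) = u ^ m := by
    rw [hu, ← Complex.exp_nat_mul]
    ring_nf
  have hD : (fun l : Fin m =>
      Complex.exp (2*(Real.pi:ℂ)*Complex.I*((l:ℕ):ℂ)/((m:ℂ)+(m:ℂ)))) =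
      fun l : Fin m => ω ^ (l:ℕ) := by
    funext l
    rw [hω, ← Complex.exp_nat_mul]
    congr 1
    ring
  rw [hc, hD]
  set W : Matrix (Fin m) (Fin m) ℂ := Matrix.of fun k l : Fin m => v (2 * (k : ℕ)) ^ (l : ℕ) with hW
  set d : Fin m → ℂ := fun l : Fin m => ω ^ (l:ℕ) with hd
  have hmerge :
      (Matrix.reindex finSumFinEquiv finSumFinEquiv (Matrix.fromBlocks W 0 0 W)) *
      (Matrix.reindex finSumFinEquiv finSumFinEquiv
        (Matrix.fromBlocks (1 : Matrix (Fin m) (Fin m) ℂ) 0 0 (Matrix.diagonal d))) *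
      (Matrix.reindex finSumFinEquiv finSumFinEquiv
        (Matrix.fromBlocks (1 : Matrix (Fin m) (Fin m) ℂ) 1 1 (-1))) *
      (Matrix.reindex finSumFinEquiv finSumFinEquiv
        (Matrix.fromBlocks (1 : Matrix (Fin m) (Fin m) ℂ) 0 0
          (u ^ m • (1 : Matrix (Fin m) (Fin m) ℂ)))) =
      Matrix.reindex finSumFinEquiv finSumFinEquiv
        (Matrix.fromBlocks W (u ^ m • W) (W * Matrix.diagonal d)
          (-(u ^ m • (W * Matrix.diagonal d)))) := by
    simp only [Matrix.reindex_apply, Matrix.submatrix_mul_equiv, Matrix.fromBlocks_multiply,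
      Matrix.one_mul, Matrix.mul_one, Matrix.zero_mul, Matrix.mul_zero, add_zero, zero_add,
      Matrix.mul_smul, Matrix.smul_mul, Matrix.mul_neg, Matrix.neg_mul, smul_neg, neg_zero]
  rw [Matrix.mul_assoc, Matrix.mul_assoc, Matrix.mul_assoc, ← Matrix.mul_assoc
    (Matrix.reindex finSumFinEquiv finSumFinEquiv (Matrix.fromBlocks W 0 0 W)),
    ← Matrix.mul_assoc (_ * _), hmerge]
  ext k l
  rw [Matrix.of_apply, evenOddPerm_transpose_mul, Matrix.reindex_apply, Matrix.submatrix_apply,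
    finSumFinEquiv_symm_eq, finSumFinEquiv_symm_eq]
  have hk := k.isLt
  have hl := l.isLt
  by_cases hk2 : (k:ℕ) % 2 = 0
  · obtain ⟨a, ha⟩ : ∃ a, (k:ℕ) = 2 * a := ⟨(k:ℕ)/2, by omega⟩
    have hdiv : (k:ℕ)/2 = a := by omega
    by_cases hlm : (l:ℕ) < m
    · rw [dif_pos (show ((⟨if (k:ℕ) % 2 = 0 then (k:ℕ)/2 else m + (k:ℕ)/2, by split_ifs <;> omega⟩ : Fin (m+m)):ℕ) < m
        by simp only [hk2, if_pos]; omega)]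
      simp only [Matrix.fromBlocks_apply₁₁, hW, Matrix.of_apply, hk2, if_pos, hdiv, dif_pos hlm]
      rw [ha]
    · rw [dif_pos (show ((⟨if (k:ℕ) % 2 = 0 then (k:ℕ)/2 else m + (k:ℕ)/2, by split_ifs <;> omega⟩ : Fin (m+m)):ℕ) < m
        by simp only [hk2, if_pos]; omega)]
      obtain ⟨b, hb⟩ : ∃ b, (l:ℕ) = m + b := ⟨(l:ℕ) - m, by omega⟩
      have hsub : (l:ℕ) - m = b := by omega
      simp only [Matrix.fromBlocks_apply₁₂, Matrix.smul_apply, hW, Matrix.of_apply, hk2, if_pos,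
        hdiv, hsub, smul_eq_mul, dif_neg hlm]
      rw [ha, hb, hvpow, hvpow,
        show 2*a*(m+b) = a*(m+m) + 2*a*b by ring, hper, pow_add]
      ring
  · obtain ⟨a, ha⟩ : ∃ a, (k:ℕ) = 2 * a + 1 := ⟨(k:ℕ)/2, by omega⟩
    have hdiv : (k:ℕ)/2 = a := by omega
    by_cases hlm : (l:ℕ) < m
    · rw [dif_neg (show ¬ ((⟨if (k:ℕ) % 2 = 0 then (k:ℕ)/2 else m + (k:ℕ)/2, by split_ifs <;> omega⟩ : Fin (m+m)):ℕ) < m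
        by simp only [hk2, if_false]; omega)]
      simp only [Matrix.fromBlocks_apply₂₁, Matrix.mul_diagonal, hW, hd, Matrix.of_apply, hk2,
        if_false, Nat.add_sub_cancel_left, Nat.add_sub_cancel, hdiv, dif_pos hlm]
      rw [ha, hvpow, hvpow,
        show (2*a+1)*(l:ℕ) = 2*a*(l:ℕ) + (l:ℕ) by ring, pow_add]
      ring
    · rw [dif_neg (show ¬ ((⟨if (k:ℕ) % 2 = 0 then (k:ℕ)/2 else m + (k:ℕ)/2, by split_ifs <;> omega⟩ : Fin (m+m)):ℕ) < m
        by simp only [hk2, if_false]; omega)]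
      obtain ⟨b, hb⟩ : ∃ b, (l:ℕ) = m + b := ⟨(l:ℕ) - m, by omega⟩
      have hsub : (l:ℕ) - m = b := by omega
      simp only [Matrix.fromBlocks_apply₂₂, Matrix.neg_apply, Matrix.smul_apply,
        Matrix.mul_diagonal, hW, hd, Matrix.of_apply, hk2, if_false, Nat.add_sub_cancel_left,
        Nat.add_sub_cancel, hdiv, hsub, smul_eq_mul, dif_neg hlm]
      rw [ha, hb, hvpow, hvpow,
        show (2*a+1)*(m+b) = a*(m+m) + (m + (2*a*b+b)) by ring, hper, pow_add, pow_add, hωm]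
      ring
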